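/- arXiv:math/0507363 — 2 statements merged into one kernel-verified Lean document; each statement's English description precedes it below -/
import Mathlib

section
/- The group F₂ × F₂ (the direct product of two free groups of rank 2) is not coherent: it contains a finitely generated subgroup that is not finitely presented. -/
noncomputable section

open SemidirectProduct
open scoped commutatorElement

theorem zpow_shift {G : Type*} [Group G] (A : MulAut G) (x : ℤ → G)
    (h : ∀ i, A (x i) = x (i + 1)) : ∀ (n i : ℤ), (A ^ n) (x i) = x (i + n) := by
  have hinv : ∀ i, A⁻¹ (x i) = x (i - 1) := by
    intro i
    have := h (i - 1)
    rw [sub_add_cancel] at this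
    rw [← this]
    simp
  intro n
  induction n using Int.induction_on with
  | zero => simp
  | succ k ih =>
      intro i
      rw [zpow_add, zpow_one, MulAut.mul_apply, h i, ih (i+1)]
      ring_nf
  | pred k ih =>
      intro i
      rw [show (-(k : ℤ) - 1) = -(k:ℤ) + (-1) from by ring, zpow_add, MulAut.mul_apply,
        show ((A ^ (-1 : ℤ)) (x i)) = x (i - 1) from by rw [zpow_neg_one]; exact hinv i,
        ih (i - 1)]
      ring_nf

abbrev FZ : Type := FreeGroup ℤ
abbrev F2 : Type := FreeGroup (Fin 2)
abbrev F3 : Type := FreeGroup (Fin 3)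

def shF : FZ ≃* FZ := FreeGroup.freeGroupCongr (Equiv.addRight (1:ℤ))

theorem shF_of (i : ℤ) : shF (FreeGroup.of i) = FreeGroup.of (i+1) := by
  simp [shF]

def AM : MulAut (FZ × FZ) := MulEquiv.prodCongr shF shF

def phiM : Multiplicative ℤ →* MulAut (FZ × FZ) := zpowersHom _ AM

abbrev MGrp := (FZ × FZ) ⋊[phiM] Multiplicative ℤ

def tM : MGrp := inr (Multiplicative.ofAdd 1)
def yM : MGrp := inl (FreeGroup.of (0:ℤ), 1)
def zM : MGrp := inl (1, FreeGroup.of (0:ℤ))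

theorem AM_zpow_left (n i : ℤ) : (AM ^ n) (FreeGroup.of i, 1) = (FreeGroup.of (i+n), 1) :=
  zpow_shift AM (fun i => (FreeGroup.of i, 1))
    (fun i => by simp [AM, MulEquiv.prodCongr, shF_of]) n i

theorem AM_zpow_right (n i : ℤ) : (AM ^ n) (1, FreeGroup.of i) = (1, FreeGroup.of (i+n)) :=
  zpow_shift AM (fun i => (1, FreeGroup.of i))
    (fun i => by simp [AM, MulEquiv.prodCongr, shF_of]) n i

theorem tM_zpow (n : ℤ) : tM ^ n = inr (Multiplicative.ofAdd n) := by
  rw [tM, ← map_zpow]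
  congr 1
  rw [← ofAdd_zsmul]
  norm_num

theorem phiM_apply (n : ℤ) (p : FZ × FZ) :
    phiM (Multiplicative.ofAdd n) p = (AM ^ n) p := rfl

theorem conj_zM (n : ℤ) : tM ^ n * zM * (tM ^ n)⁻¹ = inl (1, FreeGroup.of n) := by
  rw [tM_zpow, zM, ← map_inv, ← inl_aut, phiM_apply, AM_zpow_right]
  norm_num

theorem conj_yM (n : ℤ) : tM ^ n * yM * (tM ^ n)⁻¹ = inl (FreeGroup.of n, 1) := by
  rw [tM_zpow, yM, ← map_inv, ← inl_aut, phiM_apply, AM_zpow_left]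
  norm_num

/-- the generating map for π -/
def piM : F3 →* MGrp := FreeGroup.lift ![tM, yM, zM]

theorem piM_range_top : piM.range = ⊤ := by
  rw [Subgroup.eq_top_iff']
  intro x
  have htM : tM ∈ piM.range := ⟨FreeGroup.of 0, by simp [piM]⟩
  have hyM : yM ∈ piM.range := ⟨FreeGroup.of 1, by simp [piM]⟩
  have hzM : zM ∈ piM.range := ⟨FreeGroup.of 2, by simp [piM]⟩
  have hinl_left : ∀ u : FZ, inl (u, (1:FZ)) ∈ piM.range := by
    intro u
    have : ∀ i : ℤ, inl ((FreeGroup.of i : FZ), (1:FZ)) ∈ piM.range := by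
      intro i
      rw [← conj_yM i]
      exact mul_mem (mul_mem (zpow_mem htM i) hyM) (inv_mem (zpow_mem htM i))
    -- the set of u with inl (u,1) ∈ range is a subgroup
    let K : Subgroup FZ := Subgroup.comap ((inl : FZ × FZ →* MGrp).comp (MonoidHom.inl FZ FZ)) piM.range
    have hK : ∀ i : ℤ, FreeGroup.of i ∈ K := fun i => this i
    have : K = ⊤ := by
      rw [eq_top_iff, ← FreeGroup.closure_range_of ℤ]
      rw [Subgroup.closure_le]
      rintro _ ⟨i, rfl⟩
      exact hK i
    exact (this ▸ Subgroup.mem_top u : u ∈ K)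
  have hinl_right : ∀ v : FZ, inl ((1:FZ), v) ∈ piM.range := by
    intro v
    have : ∀ i : ℤ, inl ((1:FZ), (FreeGroup.of i : FZ)) ∈ piM.range := by
      intro i
      rw [← conj_zM i]
      exact mul_mem (mul_mem (zpow_mem htM i) hzM) (inv_mem (zpow_mem htM i))
    let K : Subgroup FZ := Subgroup.comap ((inl : FZ × FZ →* MGrp).comp (MonoidHom.inr FZ FZ)) piM.range
    have hK : ∀ i : ℤ, FreeGroup.of i ∈ K := fun i => this i
    have : K = ⊤ := by
      rw [eq_top_iff, ← FreeGroup.closure_range_of ℤ]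
      rw [Subgroup.closure_le]
      rintro _ ⟨i, rfl⟩
      exact hK i
    exact (this ▸ Subgroup.mem_top v : v ∈ K)
  have hinl : ∀ p : FZ × FZ, inl p ∈ piM.range := by
    intro p
    have : (inl p : MGrp) = inl ((p.1, 1) : FZ × FZ) * inl ((1, p.2) : FZ × FZ) := by
      rw [← map_mul]
      congr 1
      ext <;> simp
    rw [this]
    exact mul_mem (hinl_left p.1) (hinl_right p.2)
  have hinr : ∀ g : Multiplicative ℤ, inr g ∈ piM.range := by
    intro g
    have : (inr g : MGrp) = tM ^ (Multiplicative.toAdd g) := by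
      rw [tM_zpow]; simp
    rw [this]
    exact zpow_mem htM _
  rw [← inl_left_mul_inr_right x]
  exact mul_mem (hinl _) (hinr _)

theorem piM_surjective : Function.Surjective piM := by
  intro x
  have : x ∈ piM.range := by rw [piM_range_top]; exact Subgroup.mem_top x
  exact this

/-! ### The relators -/

def rword (n : ℤ) : F3 :=
  ⁅(FreeGroup.of 1 : F3), (FreeGroup.of 0 : F3) ^ n * FreeGroup.of 2 * ((FreeGroup.of 0 : F3) ^ n)⁻¹⁆

def Rels : Set F3 := Set.range rword

theorem piM_of0 : piM (FreeGroup.of 0) = tM := by simp [piM]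
theorem piM_of1 : piM (FreeGroup.of 1) = yM := by simp [piM]
theorem piM_of2 : piM (FreeGroup.of 2) = zM := by simp [piM]

theorem piM_rword (n : ℤ) : piM (rword n) = ⁅yM, tM ^ n * zM * (tM ^ n)⁻¹⁆ := by
  rw [rword, map_commutatorElement]
  rw [map_mul, map_mul, map_inv, map_zpow, piM_of0, piM_of1, piM_of2]

theorem piM_rword_eq_one (n : ℤ) : piM (rword n) = 1 := by
  rw [piM_rword, conj_zM, commutatorElement_eq_one_iff_commute, yM]
  have : Commute ((FreeGroup.of (0:ℤ), 1) : FZ × FZ) ((1, FreeGroup.of n) : FZ × FZ) := by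
    show _ = _
    ext <;> simp
  exact (this.map inl)

/-! ### completeness of the presentation: `ker piM = normalClosure Rels` -/

abbrev QG := F3 ⧸ Subgroup.normalClosure Rels

def mkQ : F3 →* QG := QuotientGroup.mk' (Subgroup.normalClosure Rels)

def tQ : QG := mkQ (FreeGroup.of 0)
def yQ : QG := mkQ (FreeGroup.of 1)
def zQ : QG := mkQ (FreeGroup.of 2)

def yhat (i : ℤ) : QG := tQ ^ i * yQ * (tQ ^ i)⁻¹
def zhat (j : ℤ) : QG := tQ ^ j * zQ * (tQ ^ j)⁻¹

theorem commute_yQ_zhat (m : ℤ) : Commute yQ (zhat m) := by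
  rw [← commutatorElement_eq_one_iff_commute]
  have hmem : rword m ∈ Subgroup.normalClosure Rels :=
    Subgroup.subset_normalClosure ⟨m, rfl⟩
  have : mkQ (rword m) = 1 := by
    rw [← MonoidHom.mem_ker, mkQ, QuotientGroup.ker_mk']
    exact hmem
  rw [rword, map_commutatorElement, map_mul, map_mul, map_inv, map_zpow] at this
  exact this

theorem commute_conj {G : Type*} [Group G] {x y : G} (h : Commute x y) (c : G) :
    Commute (c * x * c⁻¹) (c * y * c⁻¹) := by
  have : (c * x * c⁻¹) * (c * y * c⁻¹) = c * (x * y) * c⁻¹ := by group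
  have h2 : (c * y * c⁻¹) * (c * x * c⁻¹) = c * (y * x) * c⁻¹ := by group
  unfold Commute SemiconjBy
  rw [this, h2, h.eq]

theorem commute_yhat_zhat (i j : ℤ) : Commute (yhat i) (zhat j) := by
  have h1 : zhat j = tQ ^ i * (tQ ^ (j - i) * zQ * (tQ ^ (j-i))⁻¹) * (tQ ^ i)⁻¹ := by
    rw [zhat]
    group
  rw [h1, yhat]
  exact commute_conj (commute_yQ_zhat (j - i)) (tQ ^ i)

def g1 : FZ →* QG := FreeGroup.lift yhat
def g2 : FZ →* QG := FreeGroup.lift zhat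

theorem commute_g1_g2 (u v : FZ) : Commute (g1 u) (g2 v) := by
  have step1 : ∀ j : ℤ, ∀ u : FZ, Commute (g1 u) (zhat j) := by
    intro j u
    have : g1 u ∈ Subgroup.centralizer {zhat j} := by
      have hrange : (g1 : FZ →* QG).range ≤ Subgroup.centralizer {zhat j} := by
        rw [g1, FreeGroup.range_lift_eq_closure, Subgroup.closure_le]
        rintro _ ⟨i, rfl⟩
        rw [SetLike.mem_coe, Subgroup.mem_centralizer_iff]
        rintro h ⟨rfl⟩
        exact ((commute_yhat_zhat i j).symm).eq
      exact hrange ⟨u, rfl⟩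
    rw [Subgroup.mem_centralizer_iff] at this
    exact (this (zhat j) rfl).symm
  have : g2 v ∈ Subgroup.centralizer {g1 u} := by
    have hrange : (g2 : FZ →* QG).range ≤ Subgroup.centralizer {g1 u} := by
      rw [g2, FreeGroup.range_lift_eq_closure, Subgroup.closure_le]
      rintro _ ⟨j, rfl⟩
      rw [SetLike.mem_coe, Subgroup.mem_centralizer_iff]
      rintro h ⟨rfl⟩
      exact (step1 j u).eq
    exact hrange ⟨v, rfl⟩
  rw [Subgroup.mem_centralizer_iff] at this
  exact (this (g1 u) rfl)

def fQ1 : FZ × FZ →* QG :=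
  MonoidHom.mk' (fun p => g1 p.1 * g2 p.2) (by
    intro p q
    simp only [Prod.fst_mul, Prod.snd_mul, map_mul]
    have := (commute_g1_g2 q.1 p.2).symm.eq
    rw [mul_assoc, ← mul_assoc (g1 q.1), ← this, mul_assoc, mul_assoc])

def fQ2 : Multiplicative ℤ →* QG := zpowersHom _ tQ

/-- extensionality helper for homs out of a product of groups -/
theorem prodHom_ext {A B C : Type*} [Group A] [Group B] [Group C]
    {f g : A × B →* C} (h1 : ∀ u, f (u,1) = g (u,1)) (h2 : ∀ v, f (1,v) = g (1,v)) : f = g := by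
  ext p
  have hp : p = (p.1, 1) * (1, p.2) := by ext <;> simp
  rw [hp, map_mul, map_mul, h1, h2]

theorem fQ1_left (u : FZ) : fQ1 (u, 1) = g1 u := by
  simp [fQ1, MonoidHom.mk'_apply]

theorem fQ1_right (v : FZ) : fQ1 (1, v) = g2 v := by
  simp [fQ1, MonoidHom.mk'_apply]

theorem AM_zpow_mk_left (n i : ℤ) :
    (AM ^ n) ((FreeGroup.of i, 1) : FZ × FZ) = ((FreeGroup.of (i+n), 1) : FZ × FZ) :=
  AM_zpow_left n i

theorem compatQ : ∀ g : Multiplicative ℤ,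
    fQ1.comp (phiM g).toMonoidHom = (MulAut.conj (fQ2 g)).toMonoidHom.comp fQ1 := by
  intro g
  set n : ℤ := Multiplicative.toAdd g with hn
  have hg : g = Multiplicative.ofAdd n := by simp [hn]
  apply prodHom_ext
  · intro u
    -- both sides, as homs in u, agree on generators
    have key : ∀ i : ℤ,
        (fQ1.comp (phiM g).toMonoidHom) ((FreeGroup.of i, 1) : FZ × FZ)
          = ((MulAut.conj (fQ2 g)).toMonoidHom.comp fQ1) ((FreeGroup.of i, 1) : FZ × FZ) := by
      intro i
      have h1 : (phiM g) ((FreeGroup.of i, 1) : FZ × FZ) = ((FreeGroup.of (i+n), 1) : FZ × FZ) := by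
        rw [hg, phiM_apply, AM_zpow_left]
      have h2 : fQ2 g = tQ ^ n := rfl
      simp only [MonoidHom.comp_apply, MulEquiv.coe_toMonoidHom, h1, MulAut.conj_apply, h2]
      rw [fQ1_left, fQ1_left]
      rw [show g1 (FreeGroup.of (i+n)) = yhat (i+n) by simp [g1],
        show g1 (FreeGroup.of i) = yhat i by simp [g1]]
      rw [yhat, yhat]
      group
    -- promote to all u via hom extensionality on FZ
    have : (fQ1.comp (phiM g).toMonoidHom).comp (MonoidHom.inl FZ FZ)
        = ((MulAut.conj (fQ2 g)).toMonoidHom.comp fQ1).comp (MonoidHom.inl FZ FZ) := by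
      apply FreeGroup.ext_hom
      intro i
      simpa using key i
    exact DFunLike.congr_fun this u
  · intro v
    have key : ∀ i : ℤ,
        (fQ1.comp (phiM g).toMonoidHom) (((1 : FZ), FreeGroup.of i) : FZ × FZ)
          = ((MulAut.conj (fQ2 g)).toMonoidHom.comp fQ1) (((1:FZ), FreeGroup.of i) : FZ × FZ) := by
      intro i
      have h1 : (phiM g) (((1:FZ), FreeGroup.of i) : FZ × FZ) = (((1:FZ), FreeGroup.of (i+n)) : FZ × FZ) := by
        rw [hg, phiM_apply, AM_zpow_right]
      have h2 : fQ2 g = tQ ^ n := rfl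
      simp only [MonoidHom.comp_apply, MulEquiv.coe_toMonoidHom, h1, MulAut.conj_apply, h2]
      rw [fQ1_right, fQ1_right]
      rw [show g2 (FreeGroup.of (i+n)) = zhat (i+n) by simp [g2],
        show g2 (FreeGroup.of i) = zhat i by simp [g2]]
      rw [zhat, zhat]
      group
    have : (fQ1.comp (phiM g).toMonoidHom).comp (MonoidHom.inr FZ FZ)
        = ((MulAut.conj (fQ2 g)).toMonoidHom.comp fQ1).comp (MonoidHom.inr FZ FZ) := by
      apply FreeGroup.ext_hom
      intro i
      simpa using key i
    exact DFunLike.congr_fun this v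

def tauQ : MGrp →* QG := SemidirectProduct.lift fQ1 fQ2 compatQ

theorem tauQ_comp_piM : tauQ.comp piM = mkQ := by
  apply FreeGroup.ext_hom
  intro i
  fin_cases i
  · show tauQ (piM (FreeGroup.of 0)) = mkQ (FreeGroup.of 0)
    rw [piM_of0]
    show tauQ (inr (Multiplicative.ofAdd 1)) = tQ
    rw [tauQ, SemidirectProduct.lift_inr]
    show tQ ^ (1 : ℤ) = tQ
    simp
  · show tauQ (piM (FreeGroup.of 1)) = mkQ (FreeGroup.of 1)
    rw [piM_of1]
    show tauQ (inl (FreeGroup.of (0:ℤ), 1)) = yQ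
    rw [tauQ, SemidirectProduct.lift_inl, fQ1_left]
    show yhat 0 = yQ
    rw [yhat]
    simp
  · show tauQ (piM (FreeGroup.of 2)) = mkQ (FreeGroup.of 2)
    rw [piM_of2]
    show tauQ (inl ((1 : FZ), FreeGroup.of (0:ℤ))) = zQ
    rw [tauQ, SemidirectProduct.lift_inl, fQ1_right]
    show zhat 0 = zQ
    rw [zhat]
    simp

theorem ker_piM : MonoidHom.ker piM = Subgroup.normalClosure Rels := by
  apply le_antisymm
  · intro w hw
    have : mkQ w = 1 := by
      have h0 := DFunLike.congr_fun tauQ_comp_piM w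
      rw [MonoidHom.comp_apply] at h0
      rw [← h0, MonoidHom.mem_ker.mp hw, map_one]
    rwa [mkQ, ← MonoidHom.mem_ker, QuotientGroup.ker_mk'] at this
  · apply Subgroup.normalClosure_le_normal
    rintro _ ⟨n, rfl⟩
    exact MonoidHom.mem_ker.mpr (piM_rword_eq_one n)

/-! ### Embedding of `MGrp` into `F2 × F2` -/

def aF : F2 := FreeGroup.of 0
def bF : F2 := FreeGroup.of 1

def jF : FZ →* F2 := FreeGroup.lift (fun i : ℤ => aF ^ i * bF * (aF ^ (i+1))⁻¹)

theorem jF_of (i : ℤ) : jF (FreeGroup.of i) = aF ^ i * bF * (aF ^ (i+1))⁻¹ := by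
  simp [jF]

/-- the auxiliary group `W = FZ ⋊ ℤ` used to prove that `jF` is injective -/
def phiW : Multiplicative ℤ →* MulAut FZ := zpowersHom _ (shF : MulAut FZ)

abbrev WGrp := FZ ⋊[phiW] Multiplicative ℤ

def qW : F2 →* WGrp :=
  FreeGroup.lift ![inr (Multiplicative.ofAdd 1), inl (FreeGroup.of (0:ℤ)) * inr (Multiplicative.ofAdd 1)]

theorem shF_zpow (n i : ℤ) : ((shF : MulAut FZ) ^ n) (FreeGroup.of i) = FreeGroup.of (i + n) :=
  zpow_shift _ (fun i => FreeGroup.of i) (fun i => shF_of i) n i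

theorem qW_aF_zpow (n : ℤ) : qW (aF ^ n) = inr (Multiplicative.ofAdd n) := by
  rw [map_zpow, show qW aF = inr (Multiplicative.ofAdd 1) by simp [qW, aF], ← map_zpow]
  congr 1
  rw [← ofAdd_zsmul]
  norm_num

theorem qW_jF_of (i : ℤ) : qW (jF (FreeGroup.of i)) = inl (FreeGroup.of i) := by
  rw [jF_of, map_mul, map_mul, map_inv, qW_aF_zpow, qW_aF_zpow,
    show qW bF = inl (FreeGroup.of (0:ℤ)) * inr (Multiplicative.ofAdd 1) by simp [qW, bF]]
  rw [← mul_assoc]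
  have h1 : (inr (Multiplicative.ofAdd i) : WGrp) * inl (FreeGroup.of (0:ℤ)) *
      inr (Multiplicative.ofAdd 1) * (inr (Multiplicative.ofAdd (i+1)))⁻¹
      = inr (Multiplicative.ofAdd i) * inl (FreeGroup.of (0:ℤ)) * (inr (Multiplicative.ofAdd i))⁻¹ := by
    rw [mul_assoc (inr (Multiplicative.ofAdd i) * inl (FreeGroup.of (0:ℤ)))]
    congr 1
    have harg : (Multiplicative.ofAdd (1:ℤ)) * (Multiplicative.ofAdd (i+1))⁻¹
        = (Multiplicative.ofAdd i)⁻¹ := by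
      rw [← ofAdd_neg, ← ofAdd_neg, ← ofAdd_add]
      congr 1
      ring
    rw [← map_inv, ← map_mul, harg, map_inv]
  rw [h1, ← map_inv, ← inl_aut]
  congr 1
  show ((shF : MulAut FZ) ^ i) (FreeGroup.of 0) = FreeGroup.of i
  rw [shF_zpow]
  norm_num

theorem jF_injective : Function.Injective jF := by
  have hcomp : qW.comp jF = SemidirectProduct.inl := by
    apply FreeGroup.ext_hom
    intro i
    simpa using qW_jF_of i
  intro u v huv
  have : qW (jF u) = qW (jF v) := by rw [huv]
  rw [show qW (jF u) = (qW.comp jF) u from rfl, show qW (jF v) = (qW.comp jF) v from rfl,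
    hcomp] at this
  exact inl_injective this

/-- exponent-sum homomorphism on `F2` -/
def sF : F2 →* Multiplicative ℤ := FreeGroup.lift (fun _ => Multiplicative.ofAdd 1)

theorem sF_aF_zpow (n : ℤ) : sF (aF ^ n) = Multiplicative.ofAdd n := by
  rw [map_zpow, show sF aF = Multiplicative.ofAdd 1 by simp [sF, aF], ← ofAdd_zsmul]
  norm_num

theorem sF_jF (u : FZ) : sF (jF u) = 1 := by
  have hcomp : sF.comp jF = 1 := by
    apply FreeGroup.ext_hom
    intro i
    rw [MonoidHom.comp_apply, jF_of, map_mul, map_mul, map_inv, sF_aF_zpow, sF_aF_zpow,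
      show sF bF = Multiplicative.ofAdd 1 by simp [sF, bF]]
    rw [MonoidHom.one_apply, ← ofAdd_neg, ← ofAdd_add, ← ofAdd_add]
    rw [show (i + 1 + -(i+1) : ℤ) = 0 from by ring]
    rfl
  rw [show sF (jF u) = (sF.comp jF) u from rfl, hcomp, MonoidHom.one_apply]

def fP1 : FZ × FZ →* F2 × F2 := jF.prodMap jF

def fP2 : Multiplicative ℤ →* F2 × F2 := zpowersHom _ ((aF, aF) : F2 × F2)

theorem prod_zpow {A B : Type*} [Group A] [Group B] (a : A) (b : B) (n : ℤ) :
    ((a, b) : A × B) ^ n = (a ^ n, b ^ n) := by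
  apply Prod.ext
  · rw [show ((a,b)^n).1 = (MonoidHom.fst A B) ((a,b)^n) from rfl, map_zpow]
    rfl
  · rw [show ((a,b)^n).2 = (MonoidHom.snd A B) ((a,b)^n) from rfl, map_zpow]
    rfl

theorem compatP : ∀ g : Multiplicative ℤ,
    fP1.comp (phiM g).toMonoidHom = (MulAut.conj (fP2 g)).toMonoidHom.comp fP1 := by
  intro g
  set n : ℤ := Multiplicative.toAdd g with hn
  have hg : g = Multiplicative.ofAdd n := by simp [hn]
  have hf2 : fP2 g = ((aF, aF) : F2 × F2) ^ n := rfl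
  have keyj : ∀ i : ℤ, jF (FreeGroup.of (i + n)) = aF ^ n * jF (FreeGroup.of i) * (aF ^ n)⁻¹ := by
    intro i
    rw [jF_of, jF_of]
    rw [show (i + n : ℤ) = n + i from by ring]
    rw [zpow_add, show (n + i + 1 : ℤ) = n + (i + 1) from by ring, zpow_add]
    group
  apply prodHom_ext
  · intro u
    have key : ∀ i : ℤ,
        (fP1.comp (phiM g).toMonoidHom) ((FreeGroup.of i, 1) : FZ × FZ)
          = ((MulAut.conj (fP2 g)).toMonoidHom.comp fP1) ((FreeGroup.of i, 1) : FZ × FZ) := by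
      intro i
      have h1 : (phiM g) ((FreeGroup.of i, 1) : FZ × FZ) = ((FreeGroup.of (i+n), 1) : FZ × FZ) := by
        rw [hg, phiM_apply, AM_zpow_left]
      simp only [MonoidHom.comp_apply, MulEquiv.coe_toMonoidHom, h1, MulAut.conj_apply, hf2]
      show ((jF (FreeGroup.of (i+n)), jF 1) : F2 × F2)
          = (aF, aF) ^ n * ((jF (FreeGroup.of i), jF 1) : F2 × F2) * ((aF, aF) ^ n)⁻¹
      rw [map_one, keyj i, prod_zpow]
      apply Prod.ext
      · simp [Prod.fst_mul]
      · simp [Prod.snd_mul]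
    have : (fP1.comp (phiM g).toMonoidHom).comp (MonoidHom.inl FZ FZ)
        = ((MulAut.conj (fP2 g)).toMonoidHom.comp fP1).comp (MonoidHom.inl FZ FZ) := by
      apply FreeGroup.ext_hom
      intro i
      simpa using key i
    exact DFunLike.congr_fun this u
  · intro v
    have key : ∀ i : ℤ,
        (fP1.comp (phiM g).toMonoidHom) (((1:FZ), FreeGroup.of i) : FZ × FZ)
          = ((MulAut.conj (fP2 g)).toMonoidHom.comp fP1) (((1:FZ), FreeGroup.of i) : FZ × FZ) := by
      intro i
      have h1 : (phiM g) (((1:FZ), FreeGroup.of i) : FZ × FZ) = (((1:FZ), FreeGroup.of (i+n)) : FZ × FZ) := by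
        rw [hg, phiM_apply, AM_zpow_right]
      simp only [MonoidHom.comp_apply, MulEquiv.coe_toMonoidHom, h1, MulAut.conj_apply, hf2]
      show ((jF 1, jF (FreeGroup.of (i+n))) : F2 × F2)
          = (aF, aF) ^ n * ((jF 1, jF (FreeGroup.of i)) : F2 × F2) * ((aF, aF) ^ n)⁻¹
      rw [map_one, keyj i, prod_zpow]
      apply Prod.ext
      · simp [Prod.fst_mul]
      · simp [Prod.snd_mul]
    have : (fP1.comp (phiM g).toMonoidHom).comp (MonoidHom.inr FZ FZ)
        = ((MulAut.conj (fP2 g)).toMonoidHom.comp fP1).comp (MonoidHom.inr FZ FZ) := by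
      apply FreeGroup.ext_hom
      intro i
      simpa using key i
    exact DFunLike.congr_fun this v

def psiM : MGrp →* F2 × F2 := SemidirectProduct.lift fP1 fP2 compatP

theorem psiM_injective : Function.Injective psiM := by
  have hker : ∀ x : MGrp, psiM x = 1 → x = 1 := by
    intro x hx
    rw [← inl_left_mul_inr_right x] at hx ⊢
    set u := x.left.1
    set v := x.left.2
    set g := x.right
    have hx1 : psiM (inl x.left * inr g) = fP1 x.left * fP2 g := by
      rw [map_mul, psiM, SemidirectProduct.lift_inl, SemidirectProduct.lift_inr]
    have hfp : fP1 x.left = ((jF u, jF v) : F2 × F2) := rfl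
    have hfp2 : fP2 g = ((aF ^ Multiplicative.toAdd g, aF ^ Multiplicative.toAdd g) : F2 × F2) := by
      rw [show fP2 g = ((aF, aF) : F2 × F2) ^ (Multiplicative.toAdd g) from rfl, prod_zpow]
    rw [hx1, hfp, hfp2] at hx
    have h1 : jF u * aF ^ Multiplicative.toAdd g = 1 := congrArg Prod.fst hx
    have h2 : jF v * aF ^ Multiplicative.toAdd g = 1 := congrArg Prod.snd hx
    have hs : sF (jF u * aF ^ Multiplicative.toAdd g) = 1 := by rw [h1, map_one]
    rw [map_mul, sF_jF, one_mul, sF_aF_zpow] at hs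
    have hg0 : Multiplicative.toAdd g = 0 := by
      have := congrArg Multiplicative.toAdd hs
      simpa using this
    have hgone : g = 1 := by
      have : Multiplicative.ofAdd (Multiplicative.toAdd g) = Multiplicative.ofAdd 0 := by rw [hg0]
      simpa using this
    rw [hg0] at h1 h2
    rw [zpow_zero, mul_one] at h1 h2
    have hu : u = 1 := jF_injective (by rw [h1, map_one])
    have hv : v = 1 := jF_injective (by rw [h2, map_one])
    have hxl : x.left = 1 := by
      have : x.left = (u, v) := rfl
      rw [this, hu, hv]
      rfl
    rw [hxl, hgone, map_one, map_one, mul_one]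
  intro x y hxy
  have h : psiM (x * y⁻¹) = 1 := by rw [map_mul, map_inv, hxy, mul_inv_cancel]
  have h2 := hker _ h
  have h3 := congrArg (· * y) h2
  simpa [mul_assoc] using h3

/-- Compactness: membership in a normal closure factors through a finite subset. -/
theorem mem_normalClosure_finite {G : Type*} [Group G] {S : Set G} {x : G}
    (hx : x ∈ Subgroup.normalClosure S) : ∃ T : Finset G, ↑T ⊆ S ∧ x ∈ Subgroup.normalClosure (T : Set G) := by
  classical
  unfold Subgroup.normalClosure at hx
  induction hx using Subgroup.closure_induction with
  | mem y hy =>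
      rw [Group.mem_conjugatesOfSet_iff] at hy
      obtain ⟨a, haS, hconj⟩ := hy
      obtain ⟨c, hc⟩ := hconj
      refine ⟨{a}, by simpa using haS, ?_⟩
      have ha : a ∈ Subgroup.normalClosure ({a} : Set G) :=
        Subgroup.subset_normalClosure (Set.mem_singleton a)
      have hy : (c : G) * a * (c : G)⁻¹ = y := by
        have := hc.eq
        group
        rw [this]
        group
      have := (Subgroup.normalClosure_normal (s := ({a} : Set G))).conj_mem a ha (c : G)
      rw [hy] at this
      simpa using this
  | one => exact ⟨∅, by simp, by exact one_mem _⟩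
  | mul y z _ _ hy hz =>
      obtain ⟨T₁, hT₁, hy⟩ := hy
      obtain ⟨T₂, hT₂, hz⟩ := hz
      refine ⟨T₁ ∪ T₂, by simp [Set.union_subset_iff, hT₁, hT₂], ?_⟩
      have h1 : Subgroup.normalClosure (T₁ : Set G) ≤ Subgroup.normalClosure ((T₁ ∪ T₂ : Finset G) : Set G) :=
        Subgroup.normalClosure_mono (by simp [Set.subset_union_left])
      have h2 : Subgroup.normalClosure (T₂ : Set G) ≤ Subgroup.normalClosure ((T₁ ∪ T₂ : Finset G) : Set G) :=
        Subgroup.normalClosure_mono (by simp)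
      exact mul_mem (h1 hy) (h2 hz)
  | inv y _ hy =>
      obtain ⟨T, hT, hy⟩ := hy
      exact ⟨T, hT, inv_mem hy⟩

theorem zpow_shift_perm {X : Type*} (e : Equiv.Perm X) (x : ℤ → X)
    (h : ∀ i, e (x i) = x (i + 1)) : ∀ (n i : ℤ), (e ^ n) (x i) = x (i + n) := by
  have hinv : ∀ i, e⁻¹ (x i) = x (i - 1) := by
    intro i
    have := h (i - 1)
    rw [sub_add_cancel] at this
    rw [← this]
    simp
  intro n
  induction n using Int.induction_on with
  | zero => simp
  | succ k ih =>
      intro i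
      rw [show ((k : ℤ) + 1) = (k : ℤ) + 1 from rfl, zpow_add, zpow_one, Equiv.Perm.mul_apply,
        h i, ih (i + 1)]
      ring_nf
  | pred k ih =>
      intro i
      rw [show (-(k : ℤ) - 1) = -(k:ℤ) + (-1) from by ring, zpow_add, Equiv.Perm.mul_apply,
        show ((e ^ (-1 : ℤ)) (x i)) = x (i - 1) from by rw [zpow_neg_one]; exact hinv i,
        ih (i - 1)]
      ring_nf

/-! ### The witness permutation group -/

abbrev XW : Type := (ℤ → ZMod 2) × ZMod 2

/-- delta function -/
def dd (c : ℤ) : ℤ → ZMod 2 := fun i => if i = c then 1 else 0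

/-- shift as an additive automorphism of `ℤ → ZMod 2` -/
def shA : (ℤ → ZMod 2) ≃+ (ℤ → ZMod 2) where
  toFun f := fun i => f (i - 1)
  invFun f := fun i => f (i + 1)
  left_inv f := by funext i; simp
  right_inv f := by funext i; simp
  map_add' f g := rfl

/-- shift on `XW` -/
def tAW : XW ≃+ XW := shA.prodCongr (AddEquiv.refl _)

def tW : Equiv.Perm XW := AddAut.toPerm XW tAW

/-- the "reading at 0" permutation -/
def yW : Equiv.Perm XW where
  toFun p := (p.1, p.2 + p.1 0)
  invFun p := (p.1, p.2 - p.1 0)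
  left_inv p := by simp
  right_inv p := by simp

/-- translation by the delta function at `c` -/
def zW (c : ℤ) : Equiv.Perm XW := Equiv.addLeft ((dd c, 0) : XW)

theorem tAW_pt (c : ℤ) : tAW ((dd c, (0 : ZMod 2))) = (dd (c+1), (0 : ZMod 2)) := by
  have : shA (dd c) = dd (c+1) := by
    funext i
    simp only [shA, AddEquiv.coe_mk, Equiv.coe_fn_mk, dd]
    exact if_congr (by omega) rfl rfl
  simp [tAW, AddEquiv.prodCongr, this]

theorem tW_pt (c : ℤ) : tW ((dd c, (0 : ZMod 2))) = (dd (c+1), (0:ZMod 2)) := tAW_pt c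

theorem tW_zpow_pt (n c : ℤ) : (tW ^ n) ((dd c, (0 : ZMod 2))) = (dd (c+n), (0:ZMod 2)) := by
  exact zpow_shift_perm tW (fun i => (dd i, 0)) (fun i => tW_pt i) n c

theorem tW_zpow_add (n : ℤ) (u v : XW) : (tW ^ n) (u + v) = (tW ^ n) u + (tW ^ n) v := by
  have : tW ^ n = AddAut.toPerm XW (n • (tAW : AddAut XW)) := by
    rw [map_zsmul]; rfl
  rw [this]
  exact map_add (n • (tAW : AddAut XW)) u v

theorem conj_zW (n c : ℤ) : tW ^ n * zW c * (tW ^ n)⁻¹ = zW (c + n) := by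
  apply Equiv.ext; intro x
  calc (tW ^ n * zW c * (tW ^ n)⁻¹) x
      = (tW ^ n) ((dd c, 0) + (tW ^ n)⁻¹ x) := rfl
    _ = (tW ^ n) ((dd c, 0)) + (tW ^ n) ((tW ^ n)⁻¹ x) := tW_zpow_add n _ _
    _ = (dd (c+n), 0) + x := by rw [tW_zpow_pt, show (tW ^ n) ((tW ^ n)⁻¹ x) = x from (Equiv.eq_symm_apply _).mp rfl]
    _ = (zW (c+n)) x := rfl

theorem commute_yW_zW {k : ℤ} (hk : k ≠ 0) : Commute yW (zW k) := by
  have h0 : dd k 0 = 0 := by simp [dd]; omega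
  ext x
  · simp [yW, zW, Equiv.Perm.mul_apply]
  · simp only [Equiv.Perm.mul_apply, yW, zW, Equiv.coe_addLeft, Equiv.coe_fn_mk,
      Prod.fst_add, Prod.snd_add, Pi.add_apply, h0]
    ring
theorem not_commute_yW_zW : ¬ Commute yW (zW 0) := by
  intro h
  have := congrArg (fun (e : Equiv.Perm XW) => (e ((0 : ℤ → ZMod 2), (0 : ZMod 2))).2) h
  simp only [Equiv.Perm.mul_apply, yW, zW, Equiv.coe_addLeft, Equiv.coe_fn_mk,
    Prod.fst_add, Prod.snd_add, Pi.add_apply] at this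
  simp [dd] at this

-- continuation fragment; will be concatenated after p3 + p2 content
section Witness

def omWN (N : ℕ) : F3 →* Equiv.Perm XW := FreeGroup.lift ![tW, yW, zW (-(N+1 : ℤ))]

theorem omWN_rword (N : ℕ) (n : ℤ) :
    omWN N (rword n) = ⁅yW, zW (-(N+1:ℤ) + n)⁆ := by
  rw [rword, map_commutatorElement, map_mul, map_mul, map_inv, map_zpow]
  rw [show (omWN N) (FreeGroup.of 0) = tW by simp [omWN],
    show (omWN N) (FreeGroup.of 1) = yW by simp [omWN],
    show (omWN N) (FreeGroup.of 2) = zW (-(N+1:ℤ)) by simp [omWN]]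
  rw [conj_zW]

theorem omWN_rword_eq_one (N : ℕ) (n : ℤ) (hn : n ≠ (N:ℤ)+1) : omWN N (rword n) = 1 := by
  rw [omWN_rword, commutatorElement_eq_one_iff_commute]
  exact commute_yW_zW (by omega)

theorem omWN_rword_ne_one (N : ℕ) : omWN N (rword ((N:ℤ)+1)) ≠ 1 := by
  rw [omWN_rword, Ne, commutatorElement_eq_one_iff_commute]
  rw [show (-(N+1:ℤ) + ((N:ℤ)+1)) = 0 by ring]
  exact not_commute_yW_zW

end Witness

def FinitelyPresentedGroup (G : Type*) [Group G] : Prop :=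
  ∃ (n : ℕ) (rels : Finset (FreeGroup (Fin n))),
    Nonempty (PresentedGroup (rels : Set (FreeGroup (Fin n))) ≃* G)

/-- A group is coherent if every finitely generated subgroup is finitely presented. -/
def IsCoherentGroup (G : Type*) [Group G] : Prop :=
  ∀ H : Subgroup G, Group.FG H → FinitelyPresentedGroup H

theorem not_fp_MGrp : ¬ FinitelyPresentedGroup MGrp := by
  rintro ⟨m, rels, ⟨e⟩⟩
  classical
  set mkR : FreeGroup (Fin m) →* PresentedGroup ((rels : Set (FreeGroup (Fin m)))) :=
    QuotientGroup.mk' (Subgroup.normalClosure (rels : Set (FreeGroup (Fin m)))) with hmkR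
  set p : FreeGroup (Fin m) →* MGrp := e.toMonoidHom.comp mkR with hp
  have hpsurj : Function.Surjective p := by
    intro x
    obtain ⟨q, hq⟩ := e.surjective x
    obtain ⟨w, hw⟩ := QuotientGroup.mk'_surjective _ q
    refine ⟨w, ?_⟩
    show e.toMonoidHom (mkR w) = x
    rw [show mkR w = q from hw]
    exact hq
  have hkerp : MonoidHom.ker p = Subgroup.normalClosure (rels : Set (FreeGroup (Fin m))) := by
    ext x
    simp only [MonoidHom.mem_ker, hp, MonoidHom.comp_apply]
    rw [show e.toMonoidHom (mkR x) = e (mkR x) from rfl, MulEquiv.map_eq_one_iff]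
    exact QuotientGroup.eq_one_iff x
  set φ : FreeGroup (Fin m) →* F3 :=
    FreeGroup.lift (fun i => Classical.choose (piM_surjective (p (FreeGroup.of i)))) with hφdef
  have hφ : ∀ i, piM (φ (FreeGroup.of i)) = p (FreeGroup.of i) := by
    intro i
    rw [hφdef, FreeGroup.lift_apply_of]
    exact Classical.choose_spec (piM_surjective (p (FreeGroup.of i)))
  have hφcomp : piM.comp φ = p := FreeGroup.ext_hom _ _ (fun i => by simpa using hφ i)
  set ψ' : F3 →* FreeGroup (Fin m) :=
    FreeGroup.lift (fun i => Classical.choose (hpsurj (piM (FreeGroup.of i)))) with hψdef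
  have hψ' : ∀ i, p (ψ' (FreeGroup.of i)) = piM (FreeGroup.of i) := by
    intro i
    rw [hψdef, FreeGroup.lift_apply_of]
    exact Classical.choose_spec (hpsurj (piM (FreeGroup.of i)))
  have hψ'comp : p.comp ψ' = piM := FreeGroup.ext_hom _ _ (fun i => by simpa using hψ' i)
  set S1 : Set F3 := Set.range (fun i : Fin 3 => FreeGroup.of i * (φ (ψ' (FreeGroup.of i)))⁻¹)
    with hS1
  set S2 : Set F3 := φ '' (rels : Set (FreeGroup (Fin m))) with hS2
  set S' : Set F3 := S1 ∪ S2 with hS'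
  have hS'fin : S'.Finite := (Set.finite_range _).union ((rels.finite_toSet).image φ)
  set N' : Subgroup F3 := Subgroup.normalClosure S' with hN'
  have hS'ker : S' ⊆ ↑(MonoidHom.ker piM) := by
    rintro s (⟨i, rfl⟩ | ⟨r, hr, rfl⟩)
    · rw [SetLike.mem_coe, MonoidHom.mem_ker, map_mul, map_inv]
      have h1 : piM (φ (ψ' (FreeGroup.of i))) = p (ψ' (FreeGroup.of i)) := by
        have := DFunLike.congr_fun hφcomp (ψ' (FreeGroup.of i))
        rwa [MonoidHom.comp_apply] at this
      have h2 : p (ψ' (FreeGroup.of i)) = piM (FreeGroup.of i) := hψ' i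
      rw [h1, h2, mul_inv_cancel]
    · rw [SetLike.mem_coe, MonoidHom.mem_ker]
      have h1 : piM (φ r) = p r := by
        have := DFunLike.congr_fun hφcomp r
        rwa [MonoidHom.comp_apply] at this
      have h2 : p r = 1 := by
        have : r ∈ MonoidHom.ker p := by
          rw [hkerp]
          exact Subgroup.subset_normalClosure hr
        exact MonoidHom.mem_ker.mp this
      rw [h1, h2]
  have hN'le : N' ≤ MonoidHom.ker piM := Subgroup.normalClosure_le_normal hS'ker
  have hkerle : MonoidHom.ker piM ≤ N' := by
    intro w hw
    have hhom : (QuotientGroup.mk' N').comp (φ.comp ψ') = QuotientGroup.mk' N' := by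
      apply FreeGroup.ext_hom
      intro i
      simp only [MonoidHom.comp_apply]
      have hmem : FreeGroup.of i * (φ (ψ' (FreeGroup.of i)))⁻¹ ∈ N' :=
        Subgroup.subset_normalClosure (Or.inl ⟨i, rfl⟩)
      have h1 : ((FreeGroup.of i * (φ (ψ' (FreeGroup.of i)))⁻¹ : F3) : F3 ⧸ N') = 1 :=
        (QuotientGroup.eq_one_iff _).mpr hmem
      rw [QuotientGroup.mk_mul, QuotientGroup.mk_inv, mul_inv_eq_one] at h1
      exact h1.symm
    have h1 : (QuotientGroup.mk' N') w = (QuotientGroup.mk' N') (φ (ψ' w)) :=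
      (DFunLike.congr_fun hhom w).symm
    have h2 : ψ' w ∈ MonoidHom.ker p := by
      have hc := DFunLike.congr_fun hψ'comp w
      rw [MonoidHom.comp_apply] at hc
      rw [MonoidHom.mem_ker, hc]
      exact MonoidHom.mem_ker.mp hw
    rw [hkerp] at h2
    haveI : (Subgroup.comap φ (Subgroup.normalClosure S2)).Normal :=
      Subgroup.Normal.comap (Subgroup.normalClosure_normal) φ
    have h3 : φ (ψ' w) ∈ Subgroup.normalClosure S2 := by
      have hcom : Subgroup.normalClosure (rels : Set (FreeGroup (Fin m)))
          ≤ Subgroup.comap φ (Subgroup.normalClosure S2) := by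
        apply Subgroup.normalClosure_le_normal
        intro r hr
        exact Subgroup.subset_normalClosure ⟨r, hr, rfl⟩
      exact hcom h2
    have h4 : φ (ψ' w) ∈ N' :=
      Subgroup.normalClosure_mono Set.subset_union_right h3
    have h5 : (QuotientGroup.mk' N') w = 1 := by
      rw [h1]
      exact (QuotientGroup.eq_one_iff _).mpr h4
    exact (QuotientGroup.eq_one_iff _).mp h5
  have hkerN' : MonoidHom.ker piM = N' := le_antisymm hkerle hN'le
  -- compactness: each element of S' lies in the normal closure of finitely many relators
  have hsub : ∀ s ∈ S', ∃ T : Finset F3, ↑T ⊆ Rels ∧ s ∈ Subgroup.normalClosure (T : Set F3) := by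
    intro s hs
    apply mem_normalClosure_finite
    rw [← ker_piM]
    exact hS'ker hs
  choose Tfun hT1 hT2 using hsub
  set g : F3 → Finset F3 := fun s => if h : s ∈ S' then Tfun s h else ∅ with hg
  set TT : Finset F3 := hS'fin.toFinset.biUnion g with hTT
  have hTTsub : ↑TT ⊆ Rels := by
    intro x hx
    rw [hTT, Finset.coe_biUnion] at hx
    simp only [Set.mem_iUnion] at hx
    obtain ⟨s, hs, hxs⟩ := hx
    have hsS' : s ∈ S' := (Set.Finite.mem_toFinset hS'fin).mp hs
    rw [hg] at hxs
    simp only [dif_pos hsS'] at hxs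
    exact hT1 s hsS' hxs
  have hS'TT : S' ⊆ ↑(Subgroup.normalClosure (TT : Set F3)) := by
    intro s hs
    have hsub2 : (↑(Tfun s hs) : Set F3) ⊆ (TT : Set F3) := by
      intro x hx
      rw [hTT, Finset.coe_biUnion]
      simp only [Set.mem_iUnion]
      refine ⟨s, (Set.Finite.mem_toFinset hS'fin).mpr hs, ?_⟩
      rw [hg]
      simpa [dif_pos hs] using hx
    exact Subgroup.normalClosure_mono hsub2 (hT2 s hs)
  have hkerTT : MonoidHom.ker piM ≤ Subgroup.normalClosure (TT : Set F3) := by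
    rw [hkerN']
    exact Subgroup.normalClosure_le_normal hS'TT
  -- the bound
  set ν : F3 → ℤ := fun x => if h : ∃ n : ℤ, rword n = x then Classical.choose h else 0 with hν
  have hνspec : ∀ x ∈ TT, rword (ν x) = x := by
    intro x hx
    have hex : ∃ n : ℤ, rword n = x := hTTsub hx
    rw [hν]
    simp only [dif_pos hex]
    exact Classical.choose_spec hex
  set NN : ℕ := TT.sup (fun x => (ν x).natAbs) with hNN
  have hTTker : (TT : Set F3) ⊆ ↑(MonoidHom.ker (omWN NN)) := by
    intro x hx
    rw [SetLike.mem_coe, MonoidHom.mem_ker]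
    have hxT : x ∈ TT := hx
    rw [← hνspec x hxT]
    apply omWN_rword_eq_one
    have hle : (ν x).natAbs ≤ NN := Finset.le_sup (f := fun x => (ν x).natAbs) hxT
    omega
  have hmem1 : rword ((NN:ℤ)+1) ∈ MonoidHom.ker piM :=
    MonoidHom.mem_ker.mpr (piM_rword_eq_one _)
  have hmem2 : rword ((NN:ℤ)+1) ∈ Subgroup.normalClosure (TT : Set F3) := hkerTT hmem1
  have hmem3 : rword ((NN:ℤ)+1) ∈ MonoidHom.ker (omWN NN) :=
    Subgroup.normalClosure_le_normal hTTker hmem2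
  exact omWN_rword_ne_one NN (MonoidHom.mem_ker.mp hmem3)

theorem F2_times_F2_not_coherent :
    ¬ IsCoherentGroup (FreeGroup (Fin 2) × FreeGroup (Fin 2)) := by
  intro hcoh
  have hFG3 : Group.FG F3 := by
    rw [Group.fg_def]
    refine ⟨(Set.finite_range (FreeGroup.of : Fin 3 → F3)).toFinset, ?_⟩
    rw [Set.Finite.coe_toFinset]
    exact FreeGroup.closure_range_of _
  haveI := hFG3
  haveI hFGM : Group.FG MGrp := Group.fg_of_surjective piM_surjective
  haveI hFGH : Group.FG ↥(psiM.range) := Group.fg_range psiM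
  obtain ⟨m, rels, ⟨e⟩⟩ := hcoh psiM.range hFGH
  exact not_fp_MGrp ⟨m, rels, ⟨e.trans (MonoidHom.ofInjective psiM_injective).symm⟩⟩
end
end

section
/- Let G be a group and suppose N = ⋂{ M ⊴ G : [G:M] < ∞ } is the intersection of all finite index normal subgroups of G, and suppose N itself has finite index in G. Then N has no proper subgroup of finite index. -/
theorem inter_finite_index_normals_no_proper_finite_index
    (G : Type*) [Group G] (N : Subgroup G)
    (hN : N = ⨅ (M : Subgroup G) (_ : M.Normal) (_ : M.FiniteIndex), M)
    (hfi : N.FiniteIndex)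
    (H : Subgroup N) (hH : H.FiniteIndex) : H = ⊤ := by
  set K := H.map N.subtype with hK
  have hKfi : K.FiniteIndex := by
    constructor
    rw [hK, Subgroup.index_map_subtype]
    exact Nat.mul_ne_zero hH.index_ne_zero hfi.index_ne_zero
  have hNle : N ≤ K := by
    calc N ≤ K.normalCore := by
            rw [hN]
            exact iInf_le_of_le K.normalCore (iInf_le_of_le K.normalCore_normal
              (iInf_le_of_le K.finiteIndex_normalCore le_rfl))
      _ ≤ K := K.normalCore_le
  ext x
  simp only [Subgroup.mem_top, iff_true]
  have hx : (x : G) ∈ K := hNle x.2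
  rcases hx with ⟨y, hy, hyx⟩
  have : y = x := Subtype.ext hyx
  exact this ▸ hy
end
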